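/- Let u : ℝ² → ℝ be a twice continuously differentiable function on a connected open set Ω satisfying 4·∂²u/∂x² + ∂²u/∂y² = 0 and ∂²u/∂x∂y = 0 on Ω, where Ω is a rectangle (a product of two open intervals). Then there exist constants c₁, c₂, c₃, c₄ such that u(x,y) = c₁(x² − 4y²) + c₂x + c₃y + c₄ for all (x,y) ∈ Ω. -/

import Mathlib

/-- Partial derivative in the first variable of a curried function. -/
noncomputable def pdx (f : ℝ → ℝ → ℝ) (x y : ℝ) : ℝ := deriv (fun t => f t y) x
/-- Partial derivative in the second variable of a curried function. -/
noncomputable def pdy (f : ℝ → ℝ → ℝ) (x y : ℝ) : ℝ := deriv (fun t => f x t) y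

private lemma const_of_hasDerivAt_zero' {f : ℝ → ℝ} {a b : ℝ}
    (hf : ∀ x ∈ Set.Ioo a b, HasDerivAt f 0 x) {x y : ℝ}
    (hx : x ∈ Set.Ioo a b) (hy : y ∈ Set.Ioo a b) : f x = f y := by
  refine (convex_Ioo a b).is_const_of_fderivWithin_eq_zero
    (fun z hz => (hf z hz).differentiableAt.differentiableWithinAt) (fun z hz => ?_) hx hy
  rw [fderivWithin_eq_fderiv (isOpen_Ioo.uniqueDiffOn z hz) (hf z hz).differentiableAt]
  have h0 : (ContinuousLinearMap.smulRight (1 : ℝ →L[ℝ] ℝ) (0 : ℝ)) = 0 := by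
    ext; simp
  rw [← h0]
  exact (hf z hz).hasFDerivAt.fderiv

private lemma poly1_of_hasDerivAt {f : ℝ → ℝ} {a b k m : ℝ}
    (hf : ∀ x ∈ Set.Ioo a b, HasDerivAt f (k * x + m) x) {x x₀ : ℝ}
    (hx : x ∈ Set.Ioo a b) (hx₀ : x₀ ∈ Set.Ioo a b) :
    f x = k / 2 * (x ^ 2 - x₀ ^ 2) + m * (x - x₀) + f x₀ := by
  have h : ∀ z ∈ Set.Ioo a b, HasDerivAt (fun t => f t - (k / 2 * t ^ 2 + m * t)) 0 z := by
    intro z hz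
    have h1 : HasDerivAt (fun t : ℝ => k / 2 * t ^ 2 + m * t) (k * z + m) z := by
      have := ((hasDerivAt_pow 2 z).const_mul (k / 2)).add ((hasDerivAt_id z).const_mul m)
      refine HasDerivAt.congr_deriv this ?_
      push_cast
      ring
    exact ((hf z hz).sub h1).congr_deriv (sub_self _)
  have h2 := const_of_hasDerivAt_zero' h hx hx₀
  linear_combination h2

/-- On an open rectangle, a C² function satisfying 4 uₓₓ + u_yy = 0 and uₓy = 0
is of the form c₁(x²−4y²)+c₂x+c₃y+c₄. -/
theorem stmt0 (a b c d : ℝ) (Ω : Set (ℝ × ℝ)) (hΩ : Ω = Set.Ioo a b ×ˢ Set.Ioo c d)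
    (u : ℝ → ℝ → ℝ)
    (hu : ContDiffOn ℝ 2 (fun p : ℝ × ℝ => u p.1 p.2) Ω)
    (hpde1 : ∀ x y, (x, y) ∈ Ω →
      4 * pdx (pdx u) x y + pdy (pdy u) x y = 0)
    (hpde2 : ∀ x y, (x, y) ∈ Ω → pdy (pdx u) x y = 0) :
    ∃ c₁ c₂ c₃ c₄ : ℝ, ∀ x y, (x, y) ∈ Ω →
      u x y = c₁ * (x ^ 2 - 4 * y ^ 2) + c₂ * x + c₃ * y + c₄ := by
  subst hΩ
  by_cases hne : (Set.Ioo a b ×ˢ Set.Ioo c d : Set (ℝ × ℝ)).Nonempty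
  swap
  · exact ⟨0, 0, 0, 0, fun x y hxy => absurd ⟨(x, y), hxy⟩ hne⟩
  obtain ⟨⟨x₀, y₀⟩, hx₀, hy₀⟩ := hne
  have hΩo : IsOpen (Set.Ioo a b ×ˢ Set.Ioo c d : Set (ℝ × ℝ)) := isOpen_Ioo.prod isOpen_Ioo
  set U : ℝ × ℝ → ℝ := fun p => u p.1 p.2 with hUdef
  set F : ℝ × ℝ → (ℝ × ℝ →L[ℝ] ℝ) := fderiv ℝ U with hFdef
  set F' : ℝ × ℝ → (ℝ × ℝ →L[ℝ] (ℝ × ℝ →L[ℝ] ℝ)) := fderiv ℝ F with hF'def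
  have hCAt : ∀ p ∈ (Set.Ioo a b ×ˢ Set.Ioo c d : Set (ℝ × ℝ)), ContDiffAt ℝ 2 U p :=
    fun p hp => hu.contDiffAt (hΩo.mem_nhds hp)
  have hUF : ∀ p ∈ (Set.Ioo a b ×ˢ Set.Ioo c d : Set (ℝ × ℝ)), HasFDerivAt U (F p) p :=
    fun p hp => ((hCAt p hp).differentiableAt two_ne_zero).hasFDerivAt
  have hFF : ∀ p ∈ (Set.Ioo a b ×ˢ Set.Ioo c d : Set (ℝ × ℝ)), HasFDerivAt F (F' p) p := by
    intro p hp
    have := ((hCAt p hp).fderiv_right (by norm_num : (1 : WithTop ℕ∞) + 1 ≤ 2)).differentiableAt one_ne_zero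
    exact this.hasFDerivAt
  have hsym : ∀ p ∈ (Set.Ioo a b ×ˢ Set.Ioo c d : Set (ℝ × ℝ)), ∀ v w, F' p v w = F' p w v := by
    intro p hp v w
    exact second_derivative_symmetric_of_eventually
      (Filter.eventually_of_mem (hΩo.mem_nhds hp) fun q hq => hUF q hq) (hFF p hp) v w
  -- first-order directional derivatives
  have hdx : ∀ x y, (x, y) ∈ (Set.Ioo a b ×ˢ Set.Ioo c d : Set (ℝ × ℝ)) →
      HasDerivAt (fun t => u t y) (F (x, y) (1, 0)) x := by
    intro x y hp
    have h2 : HasDerivAt (fun t : ℝ => ((t, y) : ℝ × ℝ)) ((1 : ℝ), (0 : ℝ)) x :=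
      (hasDerivAt_id x).prodMk (hasDerivAt_const x y)
    exact (hUF _ hp).comp_hasDerivAt_of_eq x h2 rfl
  have hdy : ∀ x y, (x, y) ∈ (Set.Ioo a b ×ˢ Set.Ioo c d : Set (ℝ × ℝ)) →
      HasDerivAt (fun t => u x t) (F (x, y) (0, 1)) y := by
    intro x y hp
    have h2 : HasDerivAt (fun t : ℝ => ((x, t) : ℝ × ℝ)) ((0 : ℝ), (1 : ℝ)) y :=
      (hasDerivAt_const y x).prodMk (hasDerivAt_id y)
    exact (hUF _ hp).comp_hasDerivAt_of_eq y h2 rfl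
  have hpdx_eq : ∀ x y, (x, y) ∈ (Set.Ioo a b ×ˢ Set.Ioo c d : Set (ℝ × ℝ)) →
      pdx u x y = F (x, y) (1, 0) := fun x y hp => (hdx x y hp).deriv
  have hpdy_eq : ∀ x y, (x, y) ∈ (Set.Ioo a b ×ˢ Set.Ioo c d : Set (ℝ × ℝ)) →
      pdy u x y = F (x, y) (0, 1) := fun x y hp => (hdy x y hp).deriv
  -- second-order directional derivatives of F
  have happ : ∀ p ∈ (Set.Ioo a b ×ˢ Set.Ioo c d : Set (ℝ × ℝ)), ∀ v : ℝ × ℝ,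
      HasFDerivAt (fun q => F q v) ((ContinuousLinearMap.apply ℝ ℝ v).comp (F' p)) p :=
    fun p hp v => (ContinuousLinearMap.apply ℝ ℝ v).hasFDerivAt.comp p (hFF p hp)
  have hvert : ∀ x y, (x, y) ∈ (Set.Ioo a b ×ˢ Set.Ioo c d : Set (ℝ × ℝ)) → ∀ v : ℝ × ℝ,
      HasDerivAt (fun t => F (x, t) v) (F' (x, y) (0, 1) v) y := by
    intro x y hp v
    have h2 : HasDerivAt (fun t : ℝ => ((x, t) : ℝ × ℝ)) ((0 : ℝ), (1 : ℝ)) y :=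
      (hasDerivAt_const y x).prodMk (hasDerivAt_id y)
    have := (happ _ hp v).comp_hasDerivAt_of_eq y h2 rfl
    exact this
  have hhoriz : ∀ x y, (x, y) ∈ (Set.Ioo a b ×ˢ Set.Ioo c d : Set (ℝ × ℝ)) → ∀ v : ℝ × ℝ,
      HasDerivAt (fun t => F (t, y) v) (F' (x, y) (1, 0) v) x := by
    intro x y hp v
    have h2 : HasDerivAt (fun t : ℝ => ((t, y) : ℝ × ℝ)) ((1 : ℝ), (0 : ℝ)) x :=
      (hasDerivAt_id x).prodMk (hasDerivAt_const x y)
    have := (happ _ hp v).comp_hasDerivAt_of_eq x h2 rfl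
    exact this
  -- identification of the pd's of pd's with entries of F'
  have hBeq : ∀ x y, (x, y) ∈ (Set.Ioo a b ×ˢ Set.Ioo c d : Set (ℝ × ℝ)) →
      pdy (pdx u) x y = F' (x, y) (0, 1) (1, 0) := by
    intro x y hp
    have hev : (fun t => pdx u x t) =ᶠ[nhds y] (fun t => F (x, t) (1, 0)) := by
      filter_upwards [Ioo_mem_nhds hp.2.1 hp.2.2] with t ht
      exact hpdx_eq x t ⟨hp.1, ht⟩
    rw [pdy, hev.deriv_eq]
    exact (hvert x y hp (1, 0)).deriv
  have hAeq : ∀ x y, (x, y) ∈ (Set.Ioo a b ×ˢ Set.Ioo c d : Set (ℝ × ℝ)) →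
      pdx (pdx u) x y = F' (x, y) (1, 0) (1, 0) := by
    intro x y hp
    have hev : (fun t => pdx u t y) =ᶠ[nhds x] (fun t => F (t, y) (1, 0)) := by
      filter_upwards [Ioo_mem_nhds hp.1.1 hp.1.2] with t ht
      exact hpdx_eq t y ⟨ht, hp.2⟩
    rw [pdx, hev.deriv_eq]
    exact (hhoriz x y hp (1, 0)).deriv
  have hCeq : ∀ x y, (x, y) ∈ (Set.Ioo a b ×ˢ Set.Ioo c d : Set (ℝ × ℝ)) →
      pdy (pdy u) x y = F' (x, y) (0, 1) (0, 1) := by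
    intro x y hp
    have hev : (fun t => pdy u x t) =ᶠ[nhds y] (fun t => F (x, t) (0, 1)) := by
      filter_upwards [Ioo_mem_nhds hp.2.1 hp.2.2] with t ht
      exact hpdy_eq x t ⟨hp.1, ht⟩
    rw [pdy, hev.deriv_eq]
    exact (hvert x y hp (0, 1)).deriv
  -- PDE in terms of F'
  have hB0 : ∀ x y, (x, y) ∈ (Set.Ioo a b ×ˢ Set.Ioo c d : Set (ℝ × ℝ)) →
      F' (x, y) (0, 1) (1, 0) = 0 := by
    intro x y hp
    rw [← hBeq x y hp]; exact hpde2 x y hp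
  have hB0' : ∀ x y, (x, y) ∈ (Set.Ioo a b ×ˢ Set.Ioo c d : Set (ℝ × ℝ)) →
      F' (x, y) (1, 0) (0, 1) = 0 := by
    intro x y hp
    rw [hsym _ hp (1, 0) (0, 1)]; exact hB0 x y hp
  have hpde1' : ∀ x y, (x, y) ∈ (Set.Ioo a b ×ˢ Set.Ioo c d : Set (ℝ × ℝ)) →
      4 * F' (x, y) (1, 0) (1, 0) + F' (x, y) (0, 1) (0, 1) = 0 := by
    intro x y hp
    rw [← hAeq x y hp, ← hCeq x y hp]; exact hpde1 x y hp
  -- u_x does not depend on y ; u_y does not depend on x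
  have hgconst : ∀ x ∈ Set.Ioo a b, ∀ y ∈ Set.Ioo c d, ∀ y' ∈ Set.Ioo c d,
      F (x, y) (1, 0) = F (x, y') (1, 0) := by
    intro x hx y hy y' hy'
    refine const_of_hasDerivAt_zero' (f := fun t => F (x, t) ((1 : ℝ), (0 : ℝ))) (fun t ht => ?_) hy hy'
    have := hvert x t ⟨hx, ht⟩ (1, 0)
    rwa [hB0 x t ⟨hx, ht⟩] at this
  have hhconst : ∀ y ∈ Set.Ioo c d, ∀ x ∈ Set.Ioo a b, ∀ x' ∈ Set.Ioo a b,
      F (x, y) (0, 1) = F (x', y) (0, 1) := by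
    intro y hy x hx x' hx'
    refine const_of_hasDerivAt_zero' (f := fun t => F (t, y) ((0 : ℝ), (1 : ℝ))) (fun t ht => ?_) hx hx'
    have := hhoriz t y ⟨ht, hy⟩ (0, 1)
    rwa [hB0' t y ⟨ht, hy⟩] at this
  -- u_xx does not depend on y ; u_yy does not depend on x
  have hAind : ∀ x y, (x, y) ∈ (Set.Ioo a b ×ˢ Set.Ioo c d : Set (ℝ × ℝ)) →
      F' (x, y) (1, 0) (1, 0) = F' (x, y₀) (1, 0) (1, 0) := by
    intro x y hp
    have h1 := hhoriz x y hp ((1 : ℝ), (0 : ℝ))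
    have h2 := hhoriz x y₀ ⟨hp.1, hy₀⟩ ((1 : ℝ), (0 : ℝ))
    have hev : (fun t => F (t, y) ((1 : ℝ), (0 : ℝ))) =ᶠ[nhds x]
        (fun t => F (t, y₀) ((1 : ℝ), (0 : ℝ))) := by
      filter_upwards [Ioo_mem_nhds hp.1.1 hp.1.2] with t ht
      exact hgconst t ht y hp.2 y₀ hy₀
    exact h1.unique (h2.congr_of_eventuallyEq hev)
  have hCind : ∀ x y, (x, y) ∈ (Set.Ioo a b ×ˢ Set.Ioo c d : Set (ℝ × ℝ)) →
      F' (x, y) (0, 1) (0, 1) = F' (x₀, y) (0, 1) (0, 1) := by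
    intro x y hp
    have h1 := hvert x y hp ((0 : ℝ), (1 : ℝ))
    have h2 := hvert x₀ y ⟨hx₀, hp.2⟩ ((0 : ℝ), (1 : ℝ))
    have hev : (fun t => F (x, t) ((0 : ℝ), (1 : ℝ))) =ᶠ[nhds y]
        (fun t => F (x₀, t) ((0 : ℝ), (1 : ℝ))) := by
      filter_upwards [Ioo_mem_nhds hp.2.1 hp.2.2] with t ht
      exact hhconst t ht x hp.1 x₀ hx₀
    exact h1.unique (h2.congr_of_eventuallyEq hev)
  set k : ℝ := F' (x₀, y₀) (1, 0) (1, 0) with hk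
  have hAconst : ∀ x ∈ Set.Ioo a b, F' (x, y₀) (1, 0) (1, 0) = k := by
    intro x hx
    have h1 := hpde1' x y₀ ⟨hx, hy₀⟩
    have h2 := hpde1' x₀ y₀ ⟨hx₀, hy₀⟩
    have h3 := hCind x y₀ ⟨hx, hy₀⟩
    rw [hk]; linarith
  have hCconst : ∀ y ∈ Set.Ioo c d, F' (x₀, y) (0, 1) (0, 1) = -(4 * k) := by
    intro y hy
    have h1 := hpde1' x₀ y ⟨hx₀, hy⟩
    have h2 := hAind x₀ y ⟨hx₀, hy⟩
    have h3 := hAconst x₀ hx₀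
    rw [hk]; linarith [h3]
  -- u_x = k x + c2, u_y = -4k y + c3 on the rectangle
  set c2 : ℝ := F (x₀, y₀) (1, 0) - k * x₀ with hc2
  set c3 : ℝ := F (x₀, y₀) (0, 1) + 4 * k * y₀ with hc3
  have hg : ∀ x y, (x, y) ∈ (Set.Ioo a b ×ˢ Set.Ioo c d : Set (ℝ × ℝ)) →
      F (x, y) (1, 0) = k * x + c2 := by
    intro x y hp
    have hφ : ∀ t ∈ Set.Ioo a b, HasDerivAt (fun s => F (s, y₀) ((1 : ℝ), (0 : ℝ)))
        (0 * t + k) t := by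
      intro t ht
      have := hhoriz t y₀ ⟨ht, hy₀⟩ ((1 : ℝ), (0 : ℝ))
      rw [hAconst t ht] at this
      simpa using this
    have := poly1_of_hasDerivAt hφ hp.1 hx₀
    rw [hgconst x hp.1 y hp.2 y₀ hy₀, this, hc2]
    ring
  have hh : ∀ x y, (x, y) ∈ (Set.Ioo a b ×ˢ Set.Ioo c d : Set (ℝ × ℝ)) →
      F (x, y) (0, 1) = -(4 * k) * y + c3 := by
    intro x y hp
    have hψ : ∀ t ∈ Set.Ioo c d, HasDerivAt (fun s => F (x₀, s) ((0 : ℝ), (1 : ℝ)))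
        (0 * t + -(4 * k)) t := by
      intro t ht
      have := hvert x₀ t ⟨hx₀, ht⟩ ((0 : ℝ), (1 : ℝ))
      rw [hCconst t ht] at this
      simpa using this
    have := poly1_of_hasDerivAt hψ hp.2 hy₀
    rw [hhconst y hp.2 x hp.1 x₀ hx₀, this, hc3]
    ring
  -- integrate along a horizontal then a vertical segment
  refine ⟨k / 2, c2, c3, u x₀ y₀ - k / 2 * x₀ ^ 2 + 2 * k * y₀ ^ 2 - c2 * x₀ - c3 * y₀,
    fun x y hp => ?_⟩
  have hint1 : u x y = k / 2 * (x ^ 2 - x₀ ^ 2) + c2 * (x - x₀) + u x₀ y := by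
    have hder : ∀ t ∈ Set.Ioo a b, HasDerivAt (fun s => u s y) (k * t + c2) t := by
      intro t ht
      have := hdx t y ⟨ht, hp.2⟩
      rwa [hg t y ⟨ht, hp.2⟩] at this
    exact poly1_of_hasDerivAt hder hp.1 hx₀
  have hint2 : u x₀ y = -(4 * k) / 2 * (y ^ 2 - y₀ ^ 2) + c3 * (y - y₀) + u x₀ y₀ := by
    have hder : ∀ t ∈ Set.Ioo c d, HasDerivAt (fun s => u x₀ s) (-(4 * k) * t + c3) t := by
      intro t ht
      have := hdy x₀ t ⟨hx₀, ht⟩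
      rwa [hh x₀ t ⟨hx₀, ht⟩] at this
    exact poly1_of_hasDerivAt hder hp.2 hy₀
  rw [hint1, hint2]
  ring
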